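/- Let Q(x) = (1/√(2π)) ∫_x^∞ exp(−u²/2) du. Let a > 1, ν > 0, and let C, R be real numbers with 0 < C − R < 2·√(ν·ln a). Then the sequence n ↦ Q(√(n/ν)·(C − R)) · a^(2n) tends to +∞ as n → ∞. -/

import Mathlib

open MeasureTheory

noncomputable def gaussQ (x : ℝ) : ℝ :=
  (1 / Real.sqrt (2 * Real.pi)) * ∫ u in Set.Ioi x, Real.exp (-u ^ 2 / 2)

lemma gaussQ_lower (x : ℝ) (hx : 0 ≤ x) :
    (1 / Real.sqrt (2 * Real.pi)) * Real.exp (-(x + 1) ^ 2 / 2) ≤ gaussQ x := by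
  have hfeq : (fun u : ℝ => Real.exp (-u ^ 2 / 2)) = fun u => Real.exp (-(1/2) * u ^ 2) := by
    funext u; ring_nf
  have hInt : IntegrableOn (fun u : ℝ => Real.exp (-u ^ 2 / 2)) (Set.Ioi x) := by
    rw [hfeq]
    exact (integrable_exp_neg_mul_sq (by norm_num : (0:ℝ) < 1/2)).integrableOn
  have h1 : ∫ u in Set.Ioc x (x + 1), Real.exp (-u ^ 2 / 2)
      ≤ ∫ u in Set.Ioi x, Real.exp (-u ^ 2 / 2) := by
    refine setIntegral_mono_set hInt ?_ ?_
    · exact Filter.Eventually.of_forall fun u => (Real.exp_pos _).le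
    · exact HasSubset.Subset.eventuallyLE Set.Ioc_subset_Ioi_self
  have h2 : Real.exp (-(x + 1) ^ 2 / 2)
      ≤ ∫ u in Set.Ioc x (x + 1), Real.exp (-u ^ 2 / 2) := by
    have hc : ∫ _u in Set.Ioc x (x + 1), Real.exp (-(x + 1) ^ 2 / 2)
        = Real.exp (-(x + 1) ^ 2 / 2) := by
      rw [setIntegral_const, Real.volume_real_Ioc]
      simp
    rw [← hc]
    refine setIntegral_mono_on (by simp) (hInt.mono_set Set.Ioc_subset_Ioi_self)
      measurableSet_Ioc fun u hu => ?_
    have hu1 : 0 ≤ u := le_trans hx hu.1.le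
    have hu2 : u ^ 2 ≤ (x + 1) ^ 2 := by nlinarith [hu.2]
    exact Real.exp_le_exp.mpr (by linarith)
  have hpos : 0 < 1 / Real.sqrt (2 * Real.pi) := by
    positivity
  unfold gaussQ
  exact mul_le_mul_of_nonneg_left (le_trans h2 h1) hpos.le

theorem stmt_7 (a ν C R : ℝ) (ha : 1 < a) (hν : 0 < ν)
    (hCR0 : 0 < C - R) (hCR : C - R < 2 * Real.sqrt (ν * Real.log a)) :
    Filter.Tendsto (fun n : ℕ => gaussQ (Real.sqrt ((n : ℝ) / ν) * (C - R)) * a ^ (2 * n))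
      Filter.atTop Filter.atTop := by
  have ha0 : (0:ℝ) < a := lt_trans one_pos ha
  have hloga : 0 < Real.log a := Real.log_pos ha
  set ε : ℝ := 2 * Real.log a - (C - R) ^ 2 / (2 * ν) with hε
  set δ : ℝ := (C - R) / Real.sqrt ν with hδ
  have hsq : (C - R) ^ 2 < 4 * (ν * Real.log a) := by
    have h := mul_self_lt_mul_self hCR0.le hCR
    have hs : Real.sqrt (ν * Real.log a) * Real.sqrt (ν * Real.log a) = ν * Real.log a :=
      Real.mul_self_sqrt (by positivity)
    nlinarith
  have hεpos : 0 < ε := by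
    rw [hε]
    rw [sub_pos, div_lt_iff₀ (by positivity)]
    nlinarith
  set c : ℝ := 1 / Real.sqrt (2 * Real.pi) with hc
  have hcpos : 0 < c := by rw [hc]; positivity
  -- lower bound function
  have key : ∀ n : ℕ, c * Real.exp ((n : ℝ) * ε - Real.sqrt n * δ - 1/2)
      ≤ gaussQ (Real.sqrt ((n : ℝ) / ν) * (C - R)) * a ^ (2 * n) := by
    intro n
    set x : ℝ := Real.sqrt ((n : ℝ) / ν) * (C - R) with hxdef
    have hx0 : 0 ≤ x := mul_nonneg (Real.sqrt_nonneg _) hCR0.le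
    have hx2 : x ^ 2 = (n : ℝ) / ν * (C - R) ^ 2 := by
      rw [hxdef, mul_pow, Real.sq_sqrt (by positivity)]
    have hxδ : x = Real.sqrt n * δ := by
      rw [hxdef, hδ, Real.sqrt_div (Nat.cast_nonneg n) ν]
      ring
    have hapow : (a : ℝ) ^ (2 * n) = Real.exp ((2 * n : ℕ) * Real.log a) := by
      rw [Real.exp_nat_mul, Real.exp_log ha0]
    have hexp : Real.exp (-(x + 1) ^ 2 / 2) * a ^ (2 * n)
        = Real.exp ((n : ℝ) * ε - Real.sqrt n * δ - 1/2) := by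
      rw [hapow, ← Real.exp_add]
      congr 1
      have : -(x + 1) ^ 2 / 2 = -(x ^ 2) / 2 - x - 1/2 := by ring
      rw [this, hx2, ← hxδ]
      push_cast
      rw [hε]
      field_simp
      ring
    calc c * Real.exp ((n : ℝ) * ε - Real.sqrt n * δ - 1/2)
        = c * Real.exp (-(x + 1) ^ 2 / 2) * a ^ (2 * n) := by rw [mul_assoc, hexp]
      _ ≤ gaussQ x * a ^ (2 * n) := by
          exact mul_le_mul_of_nonneg_right (gaussQ_lower x hx0) (by positivity)
  refine Filter.tendsto_atTop_mono key ?_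
  refine Filter.Tendsto.const_mul_atTop hcpos ?_
  refine Real.tendsto_exp_atTop.comp ?_
  have hs0 : Filter.Tendsto Real.sqrt Filter.atTop Filter.atTop :=
    Filter.tendsto_atTop_atTop_of_monotone (fun x y h => Real.sqrt_le_sqrt h)
      (fun b => ⟨b ^ 2, by rw [Real.sqrt_sq_eq_abs]; exact le_abs_self b⟩)
  have hsqrt : Filter.Tendsto (fun n : ℕ => Real.sqrt n) Filter.atTop Filter.atTop :=
    hs0.comp tendsto_natCast_atTop_atTop
  have h1 : Filter.Tendsto (fun n : ℕ => Real.sqrt n * (Real.sqrt n * ε - δ))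
      Filter.atTop Filter.atTop := by
    refine hsqrt.atTop_mul_atTop₀ ?_
    exact Filter.tendsto_atTop_add_const_right _ (-δ) (hsqrt.atTop_mul_const hεpos) |>.congr
      (fun n => by ring)
  refine (Filter.tendsto_atTop_add_const_right _ (-(1/2)) h1).congr fun n => ?_
  have hmm : Real.sqrt (n : ℝ) * Real.sqrt (n : ℝ) = (n : ℝ) :=
    Real.mul_self_sqrt (Nat.cast_nonneg n)
  simp only [hε, hδ]
  linear_combination (2 * Real.log a - (C - R) ^ 2 / (2 * ν)) * hmm
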